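/- Let q ≥ 2 be a natural number and χ₀ the principal Dirichlet character mod q. For every complex s with Re(s) ≥ 1/2, the sum ∑_{p | q} |log(1 − p^{-s})| over primes p dividing q is O(√(log q/log log q) + log log q), with an absolute implied constant (for q ≥ 16). -/

import Mathlib

open Finset

/-- log x ≤ x/2 for x > 0. -/
lemma aux_log_le_half (x : ℝ) (hx : 0 < x) : Real.log x ≤ x / 2 := by
  have h1 : Real.log (Real.sqrt x) ≤ Real.sqrt x - 1 :=
    Real.log_le_sub_one_of_pos (Real.sqrt_pos.mpr hx)
  have h2 : Real.log (Real.sqrt x) = Real.log x / 2 := Real.log_sqrt hx.le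
  have h3 : Real.sqrt x ^ 2 = x := Real.sq_sqrt hx.le
  nlinarith [sq_nonneg (Real.sqrt x - 2)]

/-- Termwise bound. -/
lemma aux_term_bound {p : ℕ} (hp : 2 ≤ p) {s : ℂ} (hs : (1/2 : ℝ) ≤ s.re) :
    ‖Complex.log (1 - (p : ℂ) ^ (-s))‖ ≤ 3 * (p : ℝ) ^ (-(1/2) : ℝ) := by
  have hp0 : (0:ℝ) < (p:ℝ) := by exact_mod_cast Nat.lt_of_lt_of_le Nat.zero_lt_two hp
  have hp1 : (1:ℝ) ≤ (p:ℝ) := by exact_mod_cast Nat.one_le_of_lt hp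
  set w : ℂ := (p : ℂ) ^ (-s) with hw
  set a : ℝ := (p : ℝ) ^ (-(1/2) : ℝ) with ha
  have ha0 : 0 ≤ a := Real.rpow_nonneg hp0.le _
  have hwabs : ‖w‖ = (p : ℝ) ^ (-s.re) := by
    rw [hw, show ((p:ℂ)) = ((p:ℝ):ℂ) by norm_cast,
      Complex.norm_cpow_eq_rpow_re_of_pos hp0, Complex.neg_re]
  have hwa : ‖w‖ ≤ a := by
    rw [hwabs, ha]
    exact Real.rpow_le_rpow_of_exponent_le hp1 (by linarith)
  have haa : a * a ≤ 1/2 := by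
    have : a * a = (p:ℝ)⁻¹ := by
      rw [ha, ← Real.rpow_add hp0]
      norm_num [Real.rpow_neg_one]
    rw [this]
    rw [inv_le_comm₀ hp0 (by norm_num)]
    exact_mod_cast le_trans (by norm_num) (show (2:ℝ) ≤ p by exact_mod_cast hp)
  set r : ℝ := ‖w‖ with hr
  have hr0 : 0 ≤ r := norm_nonneg w
  have hrr : r * r ≤ 1/2 := by nlinarith
  have hr45 : r ≤ 4/5 := by nlinarith
  have hrlt1 : ‖(-w)‖ < 1 := by
    rw [norm_neg, ← hr]; linarith
  have hlog := Complex.norm_log_one_add_le hrlt1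
  have h1w : (1 : ℂ) + -w = 1 - w := by ring
  simp only [norm_neg, ← hr, h1w] at hlog
  have hinv : (1 - r)⁻¹ ≤ 5 := by
    rw [inv_le_comm₀ (by linarith) (by norm_num)]
    linarith
  calc ‖Complex.log (1 - w)‖ ≤ r ^ 2 * (1 - r)⁻¹ / 2 + r := hlog
    _ ≤ 3 * a := by nlinarith [sq_nonneg r]

/-- Sum of n^(-1/2) over a finset of naturals in [1, m]. -/
lemma aux_sum_inv_sqrt (S : Finset ℕ) (m : ℕ) (hS : ∀ n ∈ S, 1 ≤ n ∧ n ≤ m) :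
    ∑ n ∈ S, ((n : ℝ) ^ (-(1/2) : ℝ)) ≤ 2 * Real.sqrt m := by
  set g : ℕ → ℝ := fun n => 2 * (Real.sqrt n - Real.sqrt ((n - 1 : ℕ) : ℝ)) with hg
  have hg0 : ∀ n, 0 ≤ g n := by
    intro n
    have h1 : ((n - 1 : ℕ) : ℝ) ≤ (n : ℝ) := by exact_mod_cast Nat.sub_le n 1
    have := Real.sqrt_le_sqrt h1
    simp only [hg]; linarith
  have hkey : ∀ n ∈ S, (n : ℝ) ^ (-(1/2) : ℝ) ≤ g n := by
    intro n hn
    obtain ⟨h1, _⟩ := hS n hn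
    have hn1 : (1:ℝ) ≤ (n:ℝ) := by exact_mod_cast h1
    have hcast : ((n - 1 : ℕ) : ℝ) = (n : ℝ) - 1 := by
      rw [Nat.cast_sub h1]; norm_num
    set b : ℝ := Real.sqrt ((n - 1 : ℕ) : ℝ) with hbdef
    set c : ℝ := Real.sqrt n with hcdef
    have hc1 : 1 ≤ c := by
      rw [hcdef, show (1:ℝ) = Real.sqrt 1 by simp]
      exact Real.sqrt_le_sqrt hn1
    have hb0 : 0 ≤ b := Real.sqrt_nonneg _
    have hbc : b ≤ c := Real.sqrt_le_sqrt (by rw [hcast]; linarith)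
    have hc2 : c ^ 2 = (n : ℝ) := Real.sq_sqrt (by linarith)
    have hb2 : b ^ 2 = (n : ℝ) - 1 := by
      rw [hbdef, Real.sq_sqrt (by rw [hcast]; linarith), hcast]
    have hval : (n : ℝ) ^ (-(1/2) : ℝ) = c⁻¹ := by
      rw [Real.rpow_neg (by linarith), hcdef, Real.sqrt_eq_rpow]
    rw [hval]
    show c⁻¹ ≤ 2 * (c - b)
    rw [inv_le_iff_one_le_mul₀ (by linarith)]
    nlinarith [sq_nonneg (c - b), hb2, hc2]
  have hsub : S ⊆ Finset.range (m + 1) := by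
    intro n hn
    exact Finset.mem_range.mpr (Nat.lt_succ_of_le (hS n hn).2)
  calc ∑ n ∈ S, (n : ℝ) ^ (-(1/2) : ℝ) ≤ ∑ n ∈ S, g n := Finset.sum_le_sum hkey
    _ ≤ ∑ n ∈ Finset.range (m + 1), g n :=
        Finset.sum_le_sum_of_subset_of_nonneg hsub (fun n _ _ => hg0 n)
    _ = 2 * Real.sqrt m := by
        rw [Finset.sum_range_succ']
        have h1 : ∀ i : ℕ, g (i + 1) = (fun j : ℕ => 2 * Real.sqrt j) (i+1) -
            (fun j : ℕ => 2 * Real.sqrt j) i := by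
          intro i; show 2 * (Real.sqrt ((i+1:ℕ):ℝ) - Real.sqrt (((i+1) - 1 : ℕ) : ℝ)) = _
          norm_num; ring
        have h2 := Finset.sum_range_sub (fun j : ℕ => 2 * Real.sqrt j) m
        rw [Finset.sum_congr rfl (fun i _ => h1 i), h2]
        simp [hg]

theorem stmt8 :
    ∃ C : ℝ, 0 < C ∧ ∀ q : ℕ, 16 ≤ q → ∀ s : ℂ, (1/2 : ℝ) ≤ s.re →
      ∑ p ∈ q.primeFactors, ‖Complex.log (1 - (p : ℂ) ^ (-s))‖
        ≤ C * (Real.sqrt (Real.log q / Real.log (Real.log q)) + Real.log (Real.log q)) := by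
  refine ⟨12, by norm_num, ?_⟩
  intro q hq s hs
  have hq0 : (0:ℝ) < (q:ℝ) := by positivity
  have hq16 : (16:ℝ) ≤ (q:ℝ) := by exact_mod_cast hq
  set L : ℝ := Real.log q with hL
  set l : ℝ := Real.log L with hl
  have hL27 : (2.772:ℝ) ≤ L := by
    have h2 : (0.6931471803 : ℝ) < Real.log 2 := Real.log_two_gt_d9
    have h16 : Real.log 16 = 4 * Real.log 2 := by
      rw [show (16:ℝ) = 2 ^ (4:ℕ) by norm_num, Real.log_pow]; norm_num
    have := Real.log_le_log (by norm_num) hq16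
    rw [h16] at this; linarith
  have hl1 : (1:ℝ) ≤ l := by
    have he : Real.exp 1 ≤ L := le_trans (le_of_lt (lt_trans Real.exp_one_lt_d9 (by norm_num))) hL27
    calc (1:ℝ) = Real.log (Real.exp 1) := (Real.log_exp 1).symm
      _ ≤ l := Real.log_le_log (Real.exp_pos 1) he
  have hl0 : (0:ℝ) < l := by linarith
  have hlL : l ≤ L / 2 := aux_log_le_half L (by linarith)
  set T : ℝ := L / l with hT
  have hT2 : (2:ℝ) ≤ T := by
    rw [hT, le_div_iff₀ hl0]; linarith
  -- log T ≥ l / 2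
  have hlogT : l / 2 ≤ Real.log T := by
    have hll : Real.log l ≤ l / 2 := aux_log_le_half l hl0
    have : Real.log T = l - Real.log l := by
      rw [hT, Real.log_div (by linarith) (by linarith)]
    rw [this]; linarith
  have hlogT0 : (0:ℝ) < Real.log T := by linarith
  have hT0 : (0:ℝ) < T := by linarith
  -- termwise bound
  have hstep1 : ∑ p ∈ q.primeFactors, ‖Complex.log (1 - (p : ℂ) ^ (-s))‖
      ≤ ∑ p ∈ q.primeFactors, 3 * (p:ℝ) ^ (-(1/2) : ℝ) := by
    refine Finset.sum_le_sum fun p hp => ?_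
    exact aux_term_bound (Nat.prime_of_mem_primeFactors hp).two_le hs
  -- split the rpow sum
  set f : ℕ → ℝ := fun p => (p:ℝ) ^ (-(1/2) : ℝ) with hf
  have hsplit : ∑ p ∈ q.primeFactors, f p =
      ∑ p ∈ q.primeFactors.filter (fun p : ℕ => (p:ℝ) ≤ T), f p +
      ∑ p ∈ q.primeFactors.filter (fun p : ℕ => ¬ ((p:ℝ) ≤ T)), f p :=
    (Finset.sum_filter_add_sum_filter_not _ _ _).symm
  -- small primes
  have hsmall : ∑ p ∈ q.primeFactors.filter (fun p : ℕ => (p:ℝ) ≤ T), f p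
      ≤ 2 * Real.sqrt T := by
    have h1 : ∑ p ∈ q.primeFactors.filter (fun p : ℕ => (p:ℝ) ≤ T), f p
        ≤ 2 * Real.sqrt (Nat.floor T) := by
      refine aux_sum_inv_sqrt _ (Nat.floor T) fun n hn => ?_
      rw [Finset.mem_filter] at hn
      exact ⟨(Nat.prime_of_mem_primeFactors hn.1).one_le, Nat.le_floor hn.2⟩
    refine le_trans h1 ?_
    have : (Nat.floor T : ℝ) ≤ T := Nat.floor_le hT0.le
    gcongr
  -- large primes
  set F : Finset ℕ := q.primeFactors.filter (fun p : ℕ => ¬ ((p:ℝ) ≤ T)) with hF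
  have hcard : (F.card : ℝ) * Real.log T ≤ L := by
    have hdvd : ∏ p ∈ F, p ∣ q :=
      dvd_trans (Finset.prod_dvd_prod_of_subset F q.primeFactors id
        (Finset.filter_subset _ _)) q.prod_primeFactors_dvd
    have hle : (∏ p ∈ F, p : ℕ) ≤ q := Nat.le_of_dvd (by omega) hdvd
    have hppos : ∀ p ∈ F, (0:ℝ) < (p:ℝ) := by
      intro p hp
      rw [hF, Finset.mem_filter] at hp
      linarith [not_le.mp hp.2]
    have h1 : (F.card : ℝ) * Real.log T ≤ ∑ p ∈ F, Real.log (p:ℝ) := by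
      calc (F.card : ℝ) * Real.log T = F.card • Real.log T := (nsmul_eq_mul _ _).symm
        _ ≤ ∑ p ∈ F, Real.log (p:ℝ) := Finset.card_nsmul_le_sum F _ _
            (fun p hp => Real.log_le_log hT0 (by
              rw [hF, Finset.mem_filter] at hp
              linarith [not_le.mp hp.2]))
    have h2 : ∑ p ∈ F, Real.log (p:ℝ) = Real.log (∏ p ∈ F, (p:ℝ)) :=
      (Real.log_prod (fun p hp => (hppos p hp).ne')).symm
    have h3 : Real.log (∏ p ∈ F, (p:ℝ)) ≤ L := by
      refine Real.log_le_log (Finset.prod_pos hppos) ?_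
      calc (∏ p ∈ F, (p:ℝ)) = ((∏ p ∈ F, p : ℕ) : ℝ) := by push_cast; ring
        _ ≤ (q:ℝ) := by exact_mod_cast hle
    linarith
  have hcard2 : (F.card : ℝ) ≤ 2 * L / l := by
    rw [le_div_iff₀ hl0]
    calc (F.card : ℝ) * l ≤ (F.card : ℝ) * (2 * Real.log T) := by
          have : (0:ℝ) ≤ (F.card : ℝ) := by positivity
          nlinarith
      _ ≤ 2 * L := by nlinarith
  have hsqT : Real.sqrt T > 0 := Real.sqrt_pos.mpr hT0
  have hlarge : ∑ p ∈ F, f p ≤ 2 * Real.sqrt T := by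
    have hterm : ∀ p ∈ F, f p ≤ (Real.sqrt T)⁻¹ := by
      intro p hp
      rw [hF, Finset.mem_filter] at hp
      have hpT : T < (p:ℝ) := not_le.mp hp.2
      have hp0 : (0:ℝ) < (p:ℝ) := lt_trans hT0 hpT
      show (p:ℝ) ^ (-(1/2) : ℝ) ≤ (Real.sqrt T)⁻¹
      rw [Real.rpow_neg hp0.le, ← Real.sqrt_eq_rpow]
      exact inv_anti₀ hsqT (Real.sqrt_le_sqrt hpT.le)
    calc ∑ p ∈ F, f p ≤ F.card • (Real.sqrt T)⁻¹ := Finset.sum_le_card_nsmul F f _ hterm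
      _ = (F.card : ℝ) * (Real.sqrt T)⁻¹ := by rw [nsmul_eq_mul]
      _ ≤ (2 * L / l) * (Real.sqrt T)⁻¹ := by gcongr
      _ = 2 * (T / Real.sqrt T) := by rw [hT]; field_simp
      _ = 2 * Real.sqrt T := by rw [Real.div_sqrt]
  -- assemble
  have htotal : ∑ p ∈ q.primeFactors, f p ≤ 4 * Real.sqrt T := by
    rw [hsplit]; linarith [hsmall, hlarge]
  calc ∑ p ∈ q.primeFactors, ‖Complex.log (1 - (p : ℂ) ^ (-s))‖
      ≤ ∑ p ∈ q.primeFactors, 3 * f p := hstep1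
    _ = 3 * ∑ p ∈ q.primeFactors, f p := by rw [Finset.mul_sum]
    _ ≤ 3 * (4 * Real.sqrt T) := by linarith [htotal]
    _ = 12 * Real.sqrt T := by ring
    _ ≤ 12 * (Real.sqrt (L / l) + l) := by
        rw [hT]; nlinarith [Real.sqrt_nonneg (L / l)]
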